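/- Let E be a real inner product space, let Σ be a differentiable manifold, and let f : Σ → E be a differentiable immersion. Let W ⊆ E be a nonempty affine subspace whose direction D is a complete subspace, with nearest-point projection π_W, and assume f(Σ) ∩ W = ∅. Assume property (C): for every q ∈ Σ and every tangent vector v in the image of df_q that is orthogonal to D, there exists η ∈ E with ⟪η, v⟫ = 0 such that the line {f(q) + tη : t ∈ ℝ} intersects W. Then for every differentiable curve α : I → Σ (I an interval) such that π_W(f(α(t))) is constant in t, the distance function t ↦ dist(f(α(t)), W) = ‖f(α(t)) − π_W(f(α(t)))‖ is constant. (This is Claim 2.7 ("Claim constant") in the proof of Theorem 1.1, in the Euclidean case c = 0: the distance to W is constant along the fibers of π_W restricted to Σ.) -/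

import Mathlib

open scoped Manifold RealInnerProductSpace

/-- Claim 2.7 ("Claim constant") in the proof of Theorem 1.1 of the paper, in the
Euclidean case `c = 0`: under property (C), the distance to `W` is constant along any
differentiable curve in `Σ` lying in a single fiber of `π_W ∘ f`. -/
theorem stmt_9
    {E : Type*} [NormedAddCommGroup E] [InnerProductSpace ℝ E]
    {E' : Type*} [NormedAddCommGroup E'] [NormedSpace ℝ E']
    {H : Type*} [TopologicalSpace H] (I : ModelWithCorners ℝ E' H)
    {M : Type*} [TopologicalSpace M] [ChartedSpace H M]
    (f : M → E) (hf : MDifferentiable I 𝓘(ℝ, E) f)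
    (himm : ∀ p : M, Function.Injective (mfderiv I 𝓘(ℝ, E) f p))
    (W : AffineSubspace ℝ E) (hWne : (W : Set E).Nonempty)
    [CompleteSpace W.direction]
    (π : E → E) (hπmem : ∀ x : E, π x ∈ W)
    (hπorth : ∀ x : E, ∀ d ∈ W.direction, ⟪x - π x, d⟫ = 0)
    (hdisj : ∀ p : M, f p ∉ W)
    (hC : ∀ (q : M) (v : E),
      (∃ w : TangentSpace I q, (mfderiv I 𝓘(ℝ, E) f q w : E) = v) →
      (∀ d ∈ W.direction, ⟪v, d⟫ = 0) →
      ∃ η : E, ⟪η, v⟫ = 0 ∧ ∃ t : ℝ, f q + t • η ∈ W)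
    (T : Set ℝ) (hT : T.OrdConnected)
    (α : ℝ → M) (hα : MDifferentiableOn 𝓘(ℝ, ℝ) I α T)
    (hfiber : ∀ s ∈ T, ∀ t ∈ T, π (f (α s)) = π (f (α t))) :
    ∀ s ∈ T, ∀ t ∈ T, ‖f (α s) - π (f (α s))‖ = ‖f (α t) - π (f (α t))‖ := by
  intro s hs t ht
  by_cases hsub : T.Subsingleton
  · rw [hsub hs ht]
  have hconv : Convex ℝ T := convex_iff_ordConnected.2 hT
  have hint : (interior T).Nonempty := by
    rw [Set.not_subsingleton_iff] at hsub
    obtain ⟨a, haT, b, hbT, hab⟩ := hsub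
    rcases hab.lt_or_gt with h | h
    · exact ⟨(a + b) / 2,
        interior_maximal ((Set.Ioo_subset_Icc_self).trans (hT.out haT hbT)) isOpen_Ioo
          ⟨by linarith, by linarith⟩⟩
    · exact ⟨(b + a) / 2,
        interior_maximal ((Set.Ioo_subset_Icc_self).trans (hT.out hbT haT)) isOpen_Ioo
          ⟨by linarith, by linarith⟩⟩
  have hud : UniqueDiffOn ℝ T := uniqueDiffOn_convex hconv hint
  set g : ℝ → E := fun u => f (α u) with hgdef
  have hgd : DifferentiableOn ℝ g T := by
    rw [← mdifferentiableOn_iff_differentiableOn]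
    exact fun x hx => (hf (α x)).comp_mdifferentiableWithinAt x (hα x hx)
  set p : E := π (f (α s)) with hp
  set g' : ℝ → E := fun u => derivWithin g T u with hg'
  have hgder : ∀ u ∈ T, HasDerivWithinAt g (g' u) T u :=
    fun u hu => (hgd u hu).hasDerivWithinAt
  have hπg : ∀ u ∈ T, π (g u) = p := fun u hu => hfiber u hu s hs
  -- Step 1: the derivative is orthogonal to the direction of `W`
  have horthD : ∀ u ∈ T, ∀ d ∈ W.direction, ⟪g' u, d⟫ = 0 := by
    intro u hu d hd
    have hcongr : Set.EqOn (fun x => ⟪g x, d⟫) (fun _ => ⟪p, d⟫) T := by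
      intro x hx
      have h1 : ⟪g x - π (g x), d⟫ = 0 := hπorth (g x) d hd
      rw [inner_sub_left, sub_eq_zero] at h1
      simpa [hπg x hx] using h1
    have h0 : derivWithin (fun x => ⟪g x, d⟫) T u = 0 := by
      rw [derivWithin_congr hcongr (hcongr hu)]
      exact (hasDerivWithinAt_const u T (⟪p, d⟫ : ℝ)).derivWithin (hud u hu)
    have hder : HasDerivWithinAt (fun x => ⟪g x, d⟫) (⟪g u, (0 : E)⟫ + ⟪g' u, d⟫) T u :=
      (hgder u hu).inner ℝ (hasDerivWithinAt_const u T d)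
    have h2 := hder.derivWithin (hud u hu)
    rw [h0] at h2
    simpa using h2.symm
  -- Step 2: the derivative is orthogonal to `g u - p` by property (C)
  have horthg : ∀ u ∈ T, ⟪g u - p, g' u⟫ = 0 := by
    intro u hu
    have humd : UniqueMDiffWithinAt 𝓘(ℝ, ℝ) T u :=
      (uniqueMDiffWithinAt_iff_uniqueDiffWithinAt).2 (hud u hu)
    have himg : ∃ w : TangentSpace I (α u), (mfderiv I 𝓘(ℝ, E) f (α u) w : E) = g' u := by
      have hchain : mfderivWithin 𝓘(ℝ, ℝ) 𝓘(ℝ, E) (f ∘ α) T u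
          = (mfderiv I 𝓘(ℝ, E) f (α u)).comp (mfderivWithin 𝓘(ℝ, ℝ) I α T u) := by
        rw [← mfderivWithin_univ]
        exact mfderivWithin_comp u ((hf (α u)).mdifferentiableWithinAt) (hα u hu)
          (Set.subset_preimage_univ) humd
      refine ⟨mfderivWithin 𝓘(ℝ, ℝ) I α T u (show TangentSpace 𝓘(ℝ, ℝ) u from (1 : ℝ)), ?_⟩
      have h1 : (mfderiv I 𝓘(ℝ, E) f (α u))
            (mfderivWithin 𝓘(ℝ, ℝ) I α T u (show TangentSpace 𝓘(ℝ, ℝ) u from (1 : ℝ)))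
          = mfderivWithin 𝓘(ℝ, ℝ) 𝓘(ℝ, E) (f ∘ α) T u
            (show TangentSpace 𝓘(ℝ, ℝ) u from (1 : ℝ)) := by rw [hchain]; rfl
      rw [h1, mfderivWithin_eq_fderivWithin]
      rfl
    obtain ⟨η, hηv, t₀, hw⟩ := hC (α u) (g' u) himg (horthD u hu)
    have ht₀ : t₀ ≠ 0 := by
      rintro rfl
      exact hdisj (α u) (by simpa using hw)
    set w₀ : E := f (α u) + t₀ • η with hw₀
    have hη : η = t₀⁻¹ • (w₀ - g u) := by
      rw [hw₀]
      simp only [hgdef, add_sub_cancel_left, smul_smul, inv_mul_cancel₀ ht₀, one_smul]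
    have hkey : ⟪w₀ - g u, g' u⟫ = 0 := by
      have := hηv
      rw [hη, real_inner_smul_left] at this
      rcases mul_eq_zero.1 this with h | h
      · exact absurd h (inv_ne_zero ht₀)
      · exact h
    have hdir : w₀ - π (g u) ∈ W.direction :=
      AffineSubspace.vsub_mem_direction hw (hπmem (g u))
    have h1 : ⟪w₀ - π (g u), g' u⟫ = 0 := by
      rw [real_inner_comm]; exact horthD u hu _ hdir
    have h2 : ⟪g u - π (g u), g' u⟫ = 0 := by
      have : (g u - π (g u)) = (w₀ - π (g u)) - (w₀ - g u) := by abel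
      rw [this, inner_sub_left, h1, hkey, sub_zero]
    rwa [hπg u hu] at h2
  -- Step 3: `‖g u - p‖²` is constant
  set h : ℝ → ℝ := fun u => ⟪g u - p, g u - p⟫ with hh
  have hder : ∀ u ∈ T, HasDerivWithinAt h (⟪g u - p, g' u⟫ + ⟪g' u, g u - p⟫) T u := by
    intro u hu
    exact ((hgder u hu).sub_const p).inner ℝ ((hgder u hu).sub_const p)
  have hbound : ∀ u ∈ T, ‖⟪g u - p, g' u⟫ + ⟪g' u, g u - p⟫‖ ≤ 0 := by
    intro u hu
    have h1 := horthg u hu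
    have h2 : ⟪g' u, g u - p⟫ = 0 := by rw [real_inner_comm]; exact h1
    rw [h1, h2, add_zero, norm_zero]
  have := hconv.norm_image_sub_le_of_norm_hasDerivWithin_le hder hbound hs ht
  rw [zero_mul] at this
  have heq : h t = h s := by
    have := norm_le_zero_iff.1 this
    linarith [sub_eq_zero.1 this]
  have h1 : ‖g s - p‖ ^ 2 = ‖g t - p‖ ^ 2 := by
    rw [← real_inner_self_eq_norm_sq, ← real_inner_self_eq_norm_sq]
    exact heq.symm
  have h2 : ‖g s - p‖ = ‖g t - p‖ := by
    nlinarith [norm_nonneg (g s - p), norm_nonneg (g t - p)]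
  rw [hπg t ht]
  exact h2
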